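/- Let μ be a finite measure on a measurable space X, let u, v : X → ℝ be measurable functions with u ≤ 0 and v ≤ 0 on X, and let δ > 0 and k > 0 be real numbers. Then μ({x ∈ X : u(x) > v(x) + δ}) ≤ μ({u < −k}) + μ({v < −k}) + (2/δ) · ∫_X |max(u,−k) − max(v,−k)| dμ. -/

import Mathlib

open MeasureTheory

/-- Let `μ` be a finite measure on `X`, `u v : X → ℝ` measurable with `u ≤ 0`, `v ≤ 0`,
and `δ > 0`, `k > 0`. Then
`μ({u > v + δ}) ≤ μ({u < −k}) + μ({v < −k}) + (2/δ) ∫ |max(u,−k) − max(v,−k)| dμ`. -/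
theorem measure_gt_add_le_truncation {X : Type*} [MeasurableSpace X]
    (μ : Measure X) [IsFiniteMeasure μ] (u v : X → ℝ)
    (hu : Measurable u) (hv : Measurable v)
    (hu0 : ∀ x, u x ≤ 0) (hv0 : ∀ x, v x ≤ 0)
    (δ k : ℝ) (hδ : 0 < δ) (hk : 0 < k) :
    μ {x | u x > v x + δ} ≤
      μ {x | u x < -k} + μ {x | v x < -k} +
        ENNReal.ofReal ((2 / δ) * ∫ x, |max (u x) (-k) - max (v x) (-k)| ∂μ) := by
  set f : X → ℝ := fun x => |max (u x) (-k) - max (v x) (-k)| with hf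
  have hfm : Measurable f := ((hu.max measurable_const).sub (hv.max measurable_const)).abs
  have hf0 : ∀ x, 0 ≤ f x := fun x => abs_nonneg _
  -- set inclusion
  have hsub : {x | u x > v x + δ} ⊆ {x | u x < -k} ∪ {x | v x < -k} ∪ {x | δ ≤ f x} := by
    intro x hx
    by_cases h1 : u x < -k
    · exact Or.inl (Or.inl h1)
    by_cases h2 : v x < -k
    · exact Or.inl (Or.inr h2)
    · right
      push_neg at h1 h2
      have : max (u x) (-k) = u x := max_eq_left h1
      have h2' : max (v x) (-k) = v x := max_eq_left h2
      simp only [Set.mem_setOf_eq, hf, this, h2']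
      have hx' : u x > v x + δ := hx
      have : δ ≤ u x - v x := by linarith
      calc δ ≤ u x - v x := this
        _ ≤ |u x - v x| := le_abs_self _
  have h1 : μ {x | u x > v x + δ} ≤
      μ {x | u x < -k} + μ {x | v x < -k} + μ {x | δ ≤ f x} :=
    le_trans (measure_mono hsub) (le_trans (measure_union_le _ _)
      (add_le_add (measure_union_le _ _) le_rfl))
  refine le_trans h1 (add_le_add_right ?_ _)
  -- Markov
  have markov : ENNReal.ofReal δ * μ {x | δ ≤ f x} ≤ ∫⁻ x, ENNReal.ofReal (f x) ∂μ := by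
    have := mul_meas_ge_le_lintegral₀ (μ := μ)
      (hfm.ennreal_ofReal.aemeasurable) (ENNReal.ofReal δ)
    have hset : {x | δ ≤ f x} = {x | ENNReal.ofReal δ ≤ ENNReal.ofReal (f x)} := by
      ext x
      simp [ENNReal.ofReal_le_ofReal_iff (hf0 x)]
    rw [hset]
    exact this
  have hint : Integrable f μ := by
    refine ⟨hfm.aestronglyMeasurable, ?_⟩
    apply HasFiniteIntegral.of_bounded (C := 2 * k)
    filter_upwards with x
    have h1 : -k ≤ max (u x) (-k) := le_max_right _ _
    have h2 : max (u x) (-k) ≤ 0 := max_le (hu0 x) (by linarith)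
    have h3 : -k ≤ max (v x) (-k) := le_max_right _ _
    have h4 : max (v x) (-k) ≤ 0 := max_le (hv0 x) (by linarith)
    rw [hf]
    simp only [Real.norm_eq_abs, abs_abs]
    rw [abs_le]
    constructor <;> linarith
  have hlint : ∫⁻ x, ENNReal.ofReal (f x) ∂μ = ENNReal.ofReal (∫ x, f x ∂μ) := by
    rw [← ofReal_integral_eq_lintegral_ofReal hint (Filter.Eventually.of_forall hf0)]
  have hI0 : 0 ≤ ∫ x, f x ∂μ := integral_nonneg hf0
  -- conclude
  have key : μ {x | δ ≤ f x} ≤ ENNReal.ofReal (δ⁻¹ * ∫ x, f x ∂μ) := by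
    rw [ENNReal.ofReal_mul (by positivity), ENNReal.ofReal_inv_of_pos hδ]
    rw [hlint] at markov
    calc μ {x | δ ≤ f x} = (ENNReal.ofReal δ)⁻¹ * (ENNReal.ofReal δ * μ {x | δ ≤ f x}) := by
          rw [← mul_assoc, ENNReal.inv_mul_cancel (by simp [hδ]) ENNReal.ofReal_ne_top, one_mul]
      _ ≤ (ENNReal.ofReal δ)⁻¹ * ENNReal.ofReal (∫ x, f x ∂μ) := mul_le_mul_right markov _
  refine le_trans key (ENNReal.ofReal_le_ofReal ?_)
  have : δ⁻¹ ≤ 2 / δ := by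
    rw [div_eq_mul_inv]
    nlinarith [inv_pos.mpr hδ]
  exact mul_le_mul_of_nonneg_right this hI0
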